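/- Fix ℓ₁, ℓ₂ ∈ [2,∞) and a bounded sequence of positive integers (a_n) with a := sup_n a_n < ∞. Then every entry of every matrix product Ā^{∘n} := Ā(n)Ā(n−2)⋯Ā(4) is uniformly bounded above by max{ℓ₁/ℓ₂, ℓ₂/ℓ₁}. -/

import Mathlib

noncomputable section

/-- `tᵢ(j) = (1 - ℓᵢ^{-j}) / (ℓᵢ - 1)`. -/
noncomputable def tfun (ℓ : ℝ) (j : ℕ) : ℝ := (1 - (ℓ ^ j)⁻¹) / (ℓ - 1)

/-- The matrices `A(2n) = [[(ℓ₂/ℓ₁)·t₂(a_{2n}), ℓ₁^{-a_{2n-1}}], [1, 0]]` and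
`A(2n+1) = [[(ℓ₁/ℓ₂)·t₁(a_{2n+1}), ℓ₂^{-a_{2n}}], [1, 0]]`. -/
noncomputable def Amat (ℓ₁ ℓ₂ : ℝ) (a : ℕ → ℕ) (n : ℕ) : Matrix (Fin 2) (Fin 2) ℝ :=
  if Even n then !![ℓ₂ / ℓ₁ * tfun ℓ₂ (a n), (ℓ₁ ^ a (n - 1))⁻¹; 1, 0]
  else !![ℓ₁ / ℓ₂ * tfun ℓ₁ (a n), (ℓ₂ ^ a (n - 1))⁻¹; 1, 0]

/-- `Ā(n) = A(n)·A(n-1)`. -/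
noncomputable def Abar (ℓ₁ ℓ₂ : ℝ) (a : ℕ → ℕ) (n : ℕ) : Matrix (Fin 2) (Fin 2) ℝ :=
  Amat ℓ₁ ℓ₂ a n * Amat ℓ₁ ℓ₂ a (n - 1)

/-- The ordered product `Ā^{∘n} = Ā(n)·Ā(n-2)·⋯·Ā(4)` over every other index down to 4. -/
noncomputable def AbarProd (ℓ₁ ℓ₂ : ℝ) (a : ℕ → ℕ) (n : ℕ) : Matrix (Fin 2) (Fin 2) ℝ :=
  ((List.range (n / 2 - 1)).map fun j => Abar ℓ₁ ℓ₂ a (n - 2 * j)).prod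

/-! ### Auxiliary machinery -/

/-- Product of consecutive `A`'s: `Aprod lo k = A(lo+k-1)·…·A(lo)`. -/
noncomputable def Aprod (ℓ₁ ℓ₂ : ℝ) (a : ℕ → ℕ) (lo : ℕ) : ℕ → Matrix (Fin 2) (Fin 2) ℝ
  | 0 => 1
  | k + 1 => Amat ℓ₁ ℓ₂ a (lo + k) * Aprod ℓ₁ ℓ₂ a lo k

/-- The base appearing in `t` at step `m`. -/
noncomputable def Lfun (ℓ₁ ℓ₂ : ℝ) (m : ℕ) : ℝ := if Even m then ℓ₂ else ℓ₁

/-- The parity-dependent scaling weight. -/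
noncomputable def wfun (ℓ₁ ℓ₂ : ℝ) (m : ℕ) : ℝ :=
  if Even m then min 1 (ℓ₁ / ℓ₂) else min (ℓ₂ / ℓ₁) 1

/-- The inductive invariant: `P = A(m)·…·A(lo)`, columns `(x_m, x_{m-1})` satisfy
nonnegativity, `w(m)x_m + (L(m)-1)L(m)^{-a_m} w(m+1) x_{m-1} ≤ 1` and `w(m+1)x_{m-1} ≤ 1`. -/
def InvP (ℓ₁ ℓ₂ : ℝ) (a : ℕ → ℕ) (m : ℕ) (P : Matrix (Fin 2) (Fin 2) ℝ) : Prop :=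
  ∀ j : Fin 2, 0 ≤ P 0 j ∧ 0 ≤ P 1 j ∧
    wfun ℓ₁ ℓ₂ m * P 0 j +
      (Lfun ℓ₁ ℓ₂ m - 1) * ((Lfun ℓ₁ ℓ₂ m) ^ a m)⁻¹ * wfun ℓ₁ ℓ₂ (m + 1) * P 1 j ≤ 1 ∧
    wfun ℓ₁ ℓ₂ (m + 1) * P 1 j ≤ 1

section lemmas

variable {ℓ₁ ℓ₂ : ℝ} (a : ℕ → ℕ)

lemma Lfun_ge (h₁ : 2 ≤ ℓ₁) (h₂ : 2 ≤ ℓ₂) (m : ℕ) : 2 ≤ Lfun ℓ₁ ℓ₂ m := by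
  unfold Lfun; split <;> assumption

lemma wfun_pos (h₁ : 2 ≤ ℓ₁) (h₂ : 2 ≤ ℓ₂) (m : ℕ) : 0 < wfun ℓ₁ ℓ₂ m := by
  have p1 : (0:ℝ) < ℓ₁ := by linarith
  have p2 : (0:ℝ) < ℓ₂ := by linarith
  have d1 : (0:ℝ) < ℓ₁ / ℓ₂ := by positivity
  have d2 : (0:ℝ) < ℓ₂ / ℓ₁ := by positivity
  unfold wfun; split
  · exact lt_min one_pos d1
  · exact lt_min d2 one_pos

lemma wfun_le_one (h₁ : 2 ≤ ℓ₁) (h₂ : 2 ≤ ℓ₂) (m : ℕ) : wfun ℓ₁ ℓ₂ m ≤ 1 := by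
  unfold wfun; split
  · exact min_le_left _ _
  · exact min_le_right _ _

lemma wfun_mul_Lfun (h₁ : 2 ≤ ℓ₁) (h₂ : 2 ≤ ℓ₂) (m : ℕ) :
    wfun ℓ₁ ℓ₂ m * Lfun ℓ₁ ℓ₂ m = min ℓ₂ ℓ₁ := by
  have p1 : (0:ℝ) < ℓ₁ := by linarith
  have p2 : (0:ℝ) < ℓ₂ := by linarith
  unfold wfun Lfun; split
  · rcases le_total ℓ₁ ℓ₂ with h | h
    · rw [min_eq_right (by rw [div_le_one p2]; exact h), div_mul_cancel₀ _ (ne_of_gt p2),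
        min_eq_right h]
    · rw [min_eq_left (by rw [le_div_iff₀ p2]; simpa using h), one_mul, min_eq_left h]
  · rcases le_total ℓ₁ ℓ₂ with h | h
    · rw [min_eq_right (by rw [le_div_iff₀ p1]; simpa using h), one_mul, min_eq_right h]
    · rw [min_eq_left (by rw [div_le_one p1]; exact h), div_mul_cancel₀ _ (ne_of_gt p1),
        min_eq_left h]

lemma wfun_two (m : ℕ) : wfun ℓ₁ ℓ₂ (m + 2) = wfun ℓ₁ ℓ₂ m := by
  unfold wfun
  have : Even (m + 2) ↔ Even m := by
    constructor <;> intro h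
    · rcases h with ⟨r, hr⟩; exact ⟨r - 1, by omega⟩
    · rcases h with ⟨r, hr⟩; exact ⟨r + 1, by omega⟩
  simp [this]

/-- Uniform description of `Amat` at a positive index. -/
lemma Amat_eq (m : ℕ) :
    Amat ℓ₁ ℓ₂ a (m + 1) =
      !![Lfun ℓ₁ ℓ₂ (m + 1) / Lfun ℓ₁ ℓ₂ m * tfun (Lfun ℓ₁ ℓ₂ (m + 1)) (a (m + 1)),
        ((Lfun ℓ₁ ℓ₂ m) ^ a m)⁻¹; 1, 0] := by
  by_cases h : Even (m + 1)
  · have hm : ¬ Even m := by simpa [Nat.even_add_one] using h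
    simp [Amat, Lfun, h, hm]
  · have hm : Even m := by simpa [Nat.even_add_one] using h
    simp [Amat, Lfun, h, hm]

lemma pow_inv_mul_le (L : ℝ) (hL : 2 ≤ L) {k : ℕ} (hk : 1 ≤ k) :
    (L ^ k)⁻¹ * L ≤ 1 := by
  have h0 : (0:ℝ) < L := by linarith
  have h1 : L ≤ L ^ k := le_self_pow₀ (by linarith) (by omega)
  have hp : (0:ℝ) < L ^ k := by positivity
  rw [inv_mul_le_iff₀ hp, mul_one]; exact h1

lemma tfun_nonneg (L : ℝ) (hL : 2 ≤ L) (k : ℕ) : 0 ≤ tfun L k := by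
  have h1 : (1:ℝ) ≤ L ^ k := one_le_pow₀ (by linarith : (1:ℝ) ≤ L)
  have hp : (0:ℝ) < L ^ k := by linarith
  have : (L ^ k)⁻¹ ≤ 1 := by
    rw [inv_le_one_iff₀]; right; exact h1
  unfold tfun
  apply div_nonneg (by linarith) (by linarith)

/-- Core scalar inequality for the inductive step. -/
lemma step_core (L L' W W' u v q q' t : ℝ)
    (hL : 2 ≤ L) (hL' : 2 ≤ L') (hW : 0 < W) (hW' : 0 < W')
    (hWL : W * L = W' * L') (hq : 0 < q) (hqL : q * L ≤ 1)
    (hq' : 0 < q') (hq'L : q' * L' ≤ 1)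
    (ht : t = (1 - q') / (L' - 1))
    (hu : 0 ≤ u) (hv : 0 ≤ v)
    (H3 : W * u + (L - 1) * q * (W' * v) ≤ 1) :
    W' * ((L' / L * t) * u + q * v) + (L' - 1) * q' * (W * u) ≤ 1 := by
  have hL0 : (0:ℝ) < L := by linarith
  have hL1 : (0:ℝ) < L' - 1 := by linarith
  have hWc : W' * (L' / L * t) = W * t := by
    field_simp
    linear_combination (-t) * hWL
  have key : t + (L' - 1) * q' ≤ 1 := by
    rw [ht, div_add' _ _ _ hL1.ne', div_le_one hL1]
    nlinarith [mul_nonneg (by linarith : (0:ℝ) ≤ L' - 2) (by linarith : (0:ℝ) ≤ 1 - q' * L')]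
  have e : W' * ((L' / L * t) * u + q * v) + (L' - 1) * q' * (W * u)
      = (W * u) * (t + (L' - 1) * q') + W' * (q * v) := by
    rw [mul_add, ← mul_assoc W', hWc]; ring
  rw [e]
  have b1 : (W * u) * (t + (L' - 1) * q') ≤ W * u := by
    nlinarith [mul_le_mul_of_nonneg_left key (mul_nonneg hW.le hu)]
  have b2 : W' * (q * v) ≤ (L - 1) * q * (W' * v) := by
    nlinarith [mul_nonneg (mul_nonneg (by linarith : (0:ℝ) ≤ L - 2) hq.le) (mul_nonneg hW'.le hv)]
  linarith

/-- The key step: the invariant is preserved under multiplication by `A(m+1)`. -/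
lemma inv_step (h₁ : 2 ≤ ℓ₁) (h₂ : 2 ≤ ℓ₂) (ha_pos : ∀ n, 1 ≤ a n) (m : ℕ)
    (P : Matrix (Fin 2) (Fin 2) ℝ) (hP : InvP ℓ₁ ℓ₂ a m P) :
    InvP ℓ₁ ℓ₂ a (m + 1) (Amat ℓ₁ ℓ₂ a (m + 1) * P) := by
  intro j
  obtain ⟨hu, hv, H3, H4⟩ := hP j
  set L := Lfun ℓ₁ ℓ₂ m with hLdef
  set L' := Lfun ℓ₁ ℓ₂ (m + 1) with hL'def
  set W := wfun ℓ₁ ℓ₂ m with hWdef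
  set W' := wfun ℓ₁ ℓ₂ (m + 1) with hW'def
  set u := P 0 j with hudef
  set v := P 1 j with hvdef
  set q : ℝ := (L ^ a m)⁻¹ with hqdef
  set q' : ℝ := (L' ^ a (m + 1))⁻¹ with hq'def
  set t : ℝ := tfun L' (a (m + 1)) with htdef
  have hL : 2 ≤ L := Lfun_ge h₁ h₂ m
  have hL' : 2 ≤ L' := Lfun_ge h₁ h₂ (m + 1)
  have hLpos : (0:ℝ) < L := by linarith
  have hL'pos : (0:ℝ) < L' := by linarith
  have hW : 0 < W := wfun_pos h₁ h₂ m
  have hW' : 0 < W' := wfun_pos h₁ h₂ (m + 1)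
  have hq : 0 < q := by rw [hqdef]; positivity
  have hq' : 0 < q' := by rw [hq'def]; positivity
  have hqL : q * L ≤ 1 := pow_inv_mul_le L hL (ha_pos m)
  have hq'L : q' * L' ≤ 1 := pow_inv_mul_le L' hL' (ha_pos (m + 1))
  have hWL : W * L = W' * L' := by
    rw [hWdef, hW'def, hLdef, hL'def, wfun_mul_Lfun h₁ h₂ m, wfun_mul_Lfun h₁ h₂ (m + 1)]
  have ht : t = (1 - q') / (L' - 1) := by rw [htdef, tfun, hq'def]
  have htnn : 0 ≤ t := by
    rw [ht]
    apply div_nonneg _ (by linarith)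
    nlinarith
  -- entries of the product
  have e0 : (Amat ℓ₁ ℓ₂ a (m + 1) * P) 0 j = (L' / L * t) * u + q * v := by
    rw [Amat_eq a m, Matrix.mul_apply, Fin.sum_univ_two]
    simp [hudef, hvdef, hqdef, hLdef, hL'def, htdef]
  have e1 : (Amat ℓ₁ ℓ₂ a (m + 1) * P) 1 j = u := by
    rw [Amat_eq a m, Matrix.mul_apply, Fin.sum_univ_two]
    simp [hudef]
  have hw2 : wfun ℓ₁ ℓ₂ (m + 1 + 1) = W := wfun_two m
  have hcnn : (0:ℝ) ≤ L' / L * t := by positivity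
  have main := step_core L L' W W' u v q q' t hL hL' hW hW' hWL hq hqL hq' hq'L ht hu hv
    (by linarith)
  refine ⟨?_, ?_, ?_, ?_⟩
  · rw [e0]
    have h5 : (0:ℝ) ≤ (L' / L * t) * u := mul_nonneg hcnn hu
    have h6 : (0:ℝ) ≤ q * v := mul_nonneg hq.le hv
    linarith
  · rw [e1]; exact hu
  · rw [e0, e1, hw2]
    linarith [main]
  · rw [e1, hw2]
    have h5 : (0:ℝ) ≤ (L - 1) * q * (W' * v) :=
      mul_nonneg (mul_nonneg (by linarith) hq.le) (mul_nonneg hW'.le hv)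
    linarith

lemma inv_base (h₁ : 2 ≤ ℓ₁) (h₂ : 2 ≤ ℓ₂) (ha_pos : ∀ n, 1 ≤ a n) (m : ℕ) :
    InvP ℓ₁ ℓ₂ a m (1 : Matrix (Fin 2) (Fin 2) ℝ) := by
  have hL : 2 ≤ Lfun ℓ₁ ℓ₂ m := Lfun_ge h₁ h₂ m
  have hW : 0 < wfun ℓ₁ ℓ₂ m := wfun_pos h₁ h₂ m
  have hW1 : wfun ℓ₁ ℓ₂ m ≤ 1 := wfun_le_one h₁ h₂ m
  have hW' : 0 < wfun ℓ₁ ℓ₂ (m + 1) := wfun_pos h₁ h₂ (m + 1)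
  have hW'1 : wfun ℓ₁ ℓ₂ (m + 1) ≤ 1 := wfun_le_one h₁ h₂ (m + 1)
  have hq : (0:ℝ) < ((Lfun ℓ₁ ℓ₂ m) ^ a m)⁻¹ := by positivity
  have hqL : ((Lfun ℓ₁ ℓ₂ m) ^ a m)⁻¹ * Lfun ℓ₁ ℓ₂ m ≤ 1 :=
    pow_inv_mul_le _ hL (ha_pos m)
  intro j
  fin_cases j <;> refine ⟨?_, ?_, ?_, ?_⟩ <;> simp [Matrix.one_apply] <;>
    nlinarith [mul_pos hq hW', mul_nonneg hq.le hW'.le]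

lemma inv_aprod (h₁ : 2 ≤ ℓ₁) (h₂ : 2 ≤ ℓ₂) (ha_pos : ∀ n, 1 ≤ a n) (m : ℕ) :
    ∀ k, InvP ℓ₁ ℓ₂ a (m + k) (Aprod ℓ₁ ℓ₂ a (m + 1) k) := by
  intro k
  induction k with
  | zero => simpa [Aprod] using inv_base a h₁ h₂ ha_pos m
  | succ k ih =>
      have : m + 1 + k = (m + k) + 1 := by omega
      rw [show m + (k + 1) = (m + k) + 1 by omega]
      show InvP ℓ₁ ℓ₂ a ((m + k) + 1) (Amat ℓ₁ ℓ₂ a (m + 1 + k) * Aprod ℓ₁ ℓ₂ a (m + 1) k)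
      rw [this]
      exact inv_step a h₁ h₂ ha_pos (m + k) _ ih

lemma aprod_succ_left (lo k : ℕ) :
    Aprod ℓ₁ ℓ₂ a lo (k + 1) = Aprod ℓ₁ ℓ₂ a (lo + 1) k * Amat ℓ₁ ℓ₂ a lo := by
  induction k generalizing lo with
  | zero => simp [Aprod]
  | succ k ih =>
      show Amat ℓ₁ ℓ₂ a (lo + (k + 1)) * Aprod ℓ₁ ℓ₂ a lo (k + 1) = _
      rw [ih lo]
      show _ = Amat ℓ₁ ℓ₂ a (lo + 1 + k) * Aprod ℓ₁ ℓ₂ a (lo + 1) k * Amat ℓ₁ ℓ₂ a lo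
      rw [show lo + (k + 1) = lo + 1 + k by omega, Matrix.mul_assoc]

lemma abarProd_eq_aprod : ∀ (c n : ℕ), 2 * c ≤ n →
    ((List.range c).map fun j => Abar ℓ₁ ℓ₂ a (n - 2 * j)).prod
      = Aprod ℓ₁ ℓ₂ a (n - 2 * c + 1) (2 * c) := by
  intro c
  induction c with
  | zero => intro n _; simp [Aprod]
  | succ c ih =>
      intro n hn
      obtain ⟨d, hd⟩ : ∃ d, n = 2 * c + 2 + d := ⟨n - (2 * c + 2), by omega⟩
      subst hd
      rw [List.range_succ, List.map_append, List.prod_append]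
      rw [ih _ (by omega)]
      have h1 : 2 * c + 2 + d - 2 * c + 1 = d + 3 := by omega
      have h2 : 2 * c + 2 + d - 2 * c = d + 2 := by omega
      have h3 : 2 * c + 2 + d - 2 * (c + 1) + 1 = d + 1 := by omega
      rw [h1]
      simp only [List.map_cons, List.map_nil, List.prod_cons, List.prod_nil, Matrix.mul_one]
      rw [h2, h3]
      rw [show 2 * (c + 1) = (2 * c + 1) + 1 by omega]
      rw [aprod_succ_left a (d + 1) (2 * c + 1), aprod_succ_left a (d + 2) (2 * c)]
      have : Abar ℓ₁ ℓ₂ a (d + 2) = Amat ℓ₁ ℓ₂ a (d + 2) * Amat ℓ₁ ℓ₂ a (d + 1) := by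
        simp [Abar]
      rw [this, show d + 2 + 1 = d + 3 by omega, Matrix.mul_assoc]

lemma one_le_wfun_mul_max (h₁ : 2 ≤ ℓ₁) (h₂ : 2 ≤ ℓ₂) (m : ℕ) :
    1 ≤ wfun ℓ₁ ℓ₂ m * max (ℓ₁ / ℓ₂) (ℓ₂ / ℓ₁) := by
  have p1 : (0:ℝ) < ℓ₁ := by linarith
  have p2 : (0:ℝ) < ℓ₂ := by linarith
  rcases le_total ℓ₁ ℓ₂ with h | h
  · have hmax : ℓ₂ / ℓ₁ ≤ max (ℓ₁ / ℓ₂) (ℓ₂ / ℓ₁) := le_max_right _ _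
    have hwge : ℓ₁ / ℓ₂ ≤ wfun ℓ₁ ℓ₂ m := by
      unfold wfun; split
      · exact le_min (by rw [div_le_one p2]; exact h) le_rfl
      · exact le_min (by
          rw [div_le_div_iff₀ p2 p1]; nlinarith) (by rw [div_le_one p2]; exact h)
    calc (1:ℝ) = (ℓ₁ / ℓ₂) * (ℓ₂ / ℓ₁) := by field_simp
      _ ≤ wfun ℓ₁ ℓ₂ m * max (ℓ₁ / ℓ₂) (ℓ₂ / ℓ₁) := by
          apply mul_le_mul hwge hmax (by positivity) (wfun_pos h₁ h₂ m).le
  · have hmax : ℓ₁ / ℓ₂ ≤ max (ℓ₁ / ℓ₂) (ℓ₂ / ℓ₁) := le_max_left _ _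
    have hwge : ℓ₂ / ℓ₁ ≤ wfun ℓ₁ ℓ₂ m := by
      unfold wfun; split
      · exact le_min (by rw [div_le_one p1]; exact h) (by
          rw [div_le_div_iff₀ p1 p2]; nlinarith)
      · exact le_min le_rfl (by rw [div_le_one p1]; exact h)
    calc (1:ℝ) = (ℓ₂ / ℓ₁) * (ℓ₁ / ℓ₂) := by field_simp
      _ ≤ wfun ℓ₁ ℓ₂ m * max (ℓ₁ / ℓ₂) (ℓ₂ / ℓ₁) := by
          apply mul_le_mul hwge hmax (by positivity) (wfun_pos h₁ h₂ m).le

end lemmas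

/-- For `ℓ₁, ℓ₂ ∈ [2,∞)` and a bounded sequence of positive integers
`(aₙ)`, every entry of every product `Ā^{∘n} = Ā(n)Ā(n-2)⋯Ā(4)` is uniformly bounded
above by `max {ℓ₁/ℓ₂, ℓ₂/ℓ₁}`. -/
theorem abar_prod_entries_bounded (ℓ₁ ℓ₂ : ℝ) (h₁ : 2 ≤ ℓ₁) (h₂ : 2 ≤ ℓ₂)
    (a : ℕ → ℕ) (ha_pos : ∀ n, 1 ≤ a n) (A : ℕ) (ha_bdd : ∀ n, a n ≤ A) :
    ∀ n : ℕ, ∀ i j : Fin 2, AbarProd ℓ₁ ℓ₂ a n i j ≤ max (ℓ₁ / ℓ₂) (ℓ₂ / ℓ₁) := by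
  intro n i j
  set M := max (ℓ₁ / ℓ₂) (ℓ₂ / ℓ₁) with hM
  set c := n / 2 - 1 with hc
  have hcn : 2 * c ≤ n := by omega
  have heq : AbarProd ℓ₁ ℓ₂ a n = Aprod ℓ₁ ℓ₂ a (n - 2 * c + 1) (2 * c) := by
    rw [AbarProd, ← hc]
    exact abarProd_eq_aprod a c n hcn
  set m₀ := n - 2 * c with hm₀
  have hmk : m₀ + 2 * c = n := by omega
  have hinv : InvP ℓ₁ ℓ₂ a n (AbarProd ℓ₁ ℓ₂ a n) := by
    rw [heq, ← hmk]
    exact inv_aprod a h₁ h₂ ha_pos m₀ (2 * c)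
  obtain ⟨hu, hv, H3, H4⟩ := hinv j
  have hWn : 0 < wfun ℓ₁ ℓ₂ n := wfun_pos h₁ h₂ n
  have hWn' : 0 < wfun ℓ₁ ℓ₂ (n + 1) := wfun_pos h₁ h₂ (n + 1)
  have hq : (0:ℝ) ≤ (Lfun ℓ₁ ℓ₂ n - 1) * ((Lfun ℓ₁ ℓ₂ n) ^ a n)⁻¹ * wfun ℓ₁ ℓ₂ (n + 1)
      * AbarProd ℓ₁ ℓ₂ a n 1 j := by
    have hL : 2 ≤ Lfun ℓ₁ ℓ₂ n := Lfun_ge h₁ h₂ n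
    have : (0:ℝ) < Lfun ℓ₁ ℓ₂ n := by linarith
    have h1 : (0:ℝ) ≤ ((Lfun ℓ₁ ℓ₂ n) ^ a n)⁻¹ := by positivity
    have h2 : (0:ℝ) ≤ Lfun ℓ₁ ℓ₂ n - 1 := by linarith
    positivity
  fin_cases i
  · -- top row : w(n) * P 0 j ≤ 1
    have h1 : wfun ℓ₁ ℓ₂ n * AbarProd ℓ₁ ℓ₂ a n 0 j ≤ 1 := by linarith
    have h2 : 1 ≤ wfun ℓ₁ ℓ₂ n * M := one_le_wfun_mul_max h₁ h₂ n
    show AbarProd ℓ₁ ℓ₂ a n 0 j ≤ M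
    nlinarith
  · -- bottom row : w(n+1) * P 1 j ≤ 1
    have h2 : 1 ≤ wfun ℓ₁ ℓ₂ (n + 1) * M := one_le_wfun_mul_max h₁ h₂ (n + 1)
    show AbarProd ℓ₁ ℓ₂ a n 1 j ≤ M
    nlinarith
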